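/- Let μ_k, μ be probability measures in P_p(S^{d−1}) (absolutely continuous) such that μ_k converges weakly to μ. Then SSW_p(μ_k, μ) → 0 as k → ∞. -/

import Mathlib

open MeasureTheory Matrix Filter

/-- Borel measurable-space structure on `d × 2` real matrices (entrywise). -/
instance (d : ℕ) : MeasurableSpace (Matrix (Fin d) (Fin 2) ℝ) :=
  MeasurableSpace.pi

/-- Geodesic projection onto the great circle generated by `U`, expressed in the
coordinates of `S¹`: `P^U(x) = Uᵀx / ‖Uᵀx‖₂`. -/
noncomputable def projS1 (d : ℕ) (U : Matrix (Fin d) (Fin 2) ℝ)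
    (x : EuclideanSpace ℝ (Fin d)) : EuclideanSpace ℝ (Fin 2) :=
  (‖Matrix.toEuclideanLin Uᵀ x‖)⁻¹ • Matrix.toEuclideanLin Uᵀ x

/-- Weak convergence implies SSW convergence: if `μ_k → μ` weakly in
`P_p(S^{d−1})` (absolutely continuous measures), then `SSW_p(μ_k, μ) → 0`.
Here `W` is the `p`-Wasserstein distance on the circle, which is bounded and
metrizes weak convergence on the compact circle. -/
theorem stmt_14 (d : ℕ) (p : ℝ) (hp : 1 ≤ p)
    (σ : Measure (Matrix (Fin d) (Fin 2) ℝ)) [IsProbabilityMeasure σ]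
    (hσ : σ {U | Uᵀ * U = 1}ᶜ = 0)
    (W : Measure (EuclideanSpace ℝ (Fin 2)) → Measure (EuclideanSpace ℝ (Fin 2)) → ℝ)
    (hW0 : ∀ m₁ m₂, 0 ≤ W m₁ m₂)
    (C : ℝ) (hWbd : ∀ m₁ m₂, W m₁ m₂ ≤ C)
    (hWweak : ∀ (mk : ℕ → Measure (EuclideanSpace ℝ (Fin 2)))
        (m : Measure (EuclideanSpace ℝ (Fin 2))),
      (∀ f : BoundedContinuousFunction (EuclideanSpace ℝ (Fin 2)) ℝ,
        Tendsto (fun k => ∫ z, f z ∂(mk k)) atTop (nhds (∫ z, f z ∂m))) →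
      Tendsto (fun k => W (mk k) m) atTop (nhds 0))
    (μs : ℕ → Measure (EuclideanSpace ℝ (Fin d)))
    (μ : Measure (EuclideanSpace ℝ (Fin d)))
    [∀ k, IsProbabilityMeasure (μs k)] [IsProbabilityMeasure μ]
    (hsupp : ∀ k, μs k {x | ‖x‖ = 1}ᶜ = 0) (hsuppμ : μ {x | ‖x‖ = 1}ᶜ = 0)
    (hac : ∀ U : Matrix (Fin d) (Fin 2) ℝ, Uᵀ * U = 1 →
      μ {x | Matrix.toEuclideanLin Uᵀ x = 0} = 0)
    (hack : ∀ k, ∀ U : Matrix (Fin d) (Fin 2) ℝ, Uᵀ * U = 1 →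
      μs k {x | Matrix.toEuclideanLin Uᵀ x = 0} = 0)
    (hweak : ∀ f : BoundedContinuousFunction (EuclideanSpace ℝ (Fin d)) ℝ,
      Tendsto (fun k => ∫ x, f x ∂(μs k)) atTop (nhds (∫ x, f x ∂μ)))
    (hmeas : ∀ k, AEMeasurable
      (fun U => (W ((μs k).map (projS1 d U)) (μ.map (projS1 d U))) ^ p) σ) :
    Tendsto
      (fun k => (∫ U, (W ((μs k).map (projS1 d U)) (μ.map (projS1 d U))) ^ p ∂σ) ^ (1 / p))
      atTop (nhds 0) := by
  have hp0 : (0:ℝ) < p := lt_of_lt_of_le one_pos hp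
  -- Step 1: for each admissible U, the mapped measures converge weakly, hence W → 0.
  have key : ∀ U : Matrix (Fin d) (Fin 2) ℝ, Uᵀ * U = 1 →
      Tendsto (fun k => W ((μs k).map (projS1 d U)) (μ.map (projS1 d U))) atTop (nhds 0) := by
    intro U hU
    set L : EuclideanSpace ℝ (Fin d) →ₗ[ℝ] EuclideanSpace ℝ (Fin 2) :=
      Matrix.toEuclideanLin Uᵀ with hL
    have hLc : Continuous L := L.continuous_of_finiteDimensional
    have hgm : Measurable (projS1 d U) := by
      unfold projS1
      exact ((hLc.measurable.norm).inv).smul hLc.measurable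
    have hmap : ∀ k, IsProbabilityMeasure ((μs k).map (projS1 d U)) :=
      fun k => Measure.isProbabilityMeasure_map hgm.aemeasurable
    have hmapμ : IsProbabilityMeasure (μ.map (projS1 d U)) :=
      Measure.isProbabilityMeasure_map hgm.aemeasurable
    -- weak convergence of the originals, as ProbabilityMeasure
    have hPM := (ProbabilityMeasure.tendsto_iff_forall_integral_tendsto
        (μs := fun k => (⟨μs k, inferInstance⟩ :
          ProbabilityMeasure (EuclideanSpace ℝ (Fin d))))
        (μ := ⟨μ, inferInstance⟩) (F := atTop)).mpr hweak
    -- the set where projS1 is continuous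
    set S : Set (EuclideanSpace ℝ (Fin d)) := {x | L x ≠ 0} with hS
    have hSopen : IsOpen S := isOpen_compl_iff.mpr (isClosed_singleton.preimage hLc)
    have hSc : Sᶜ = {x | L x = 0} := by ext x; simp [hS]
    have hμSc : μ Sᶜ = 0 := by rw [hSc]; exact hac U hU
    have hμsSc : ∀ k, μs k Sᶜ = 0 := fun k => by rw [hSc]; exact hack k U hU
    have hgc : ContinuousOn (projS1 d U) S := by
      apply ContinuousOn.fun_smul
      · exact ContinuousOn.inv₀ (hLc.norm.continuousOn)
          (fun x hx => norm_ne_zero_iff.mpr hx)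
      · exact hLc.continuousOn
    -- open-set liminf condition for the mapped measures
    have h_opens : ∀ G, IsOpen G → (μ.map (projS1 d U)) G ≤
        atTop.liminf (fun k => ((μs k).map (projS1 d U)) G) := by
      intro G hG
      have hGm : MeasurableSet G := hG.measurableSet
      have ho : IsOpen (S ∩ projS1 d U ⁻¹' G) := hgc.isOpen_inter_preimage hSopen hG
      have hsub : projS1 d U ⁻¹' G ⊆ (S ∩ projS1 d U ⁻¹' G) ∪ Sᶜ := by
        intro x hx
        by_cases hxS : x ∈ S
        · exact Or.inl ⟨hxS, hx⟩
        · exact Or.inr hxS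
      have hμeq : μ (projS1 d U ⁻¹' G) ≤ μ (S ∩ projS1 d U ⁻¹' G) := by
        calc μ (projS1 d U ⁻¹' G) ≤ μ ((S ∩ projS1 d U ⁻¹' G) ∪ Sᶜ) := measure_mono hsub
          _ ≤ μ (S ∩ projS1 d U ⁻¹' G) + μ Sᶜ := measure_union_le _ _
          _ = μ (S ∩ projS1 d U ⁻¹' G) := by rw [hμSc, add_zero]
      have hlim := ProbabilityMeasure.le_liminf_measure_open_of_tendsto hPM ho
      have hmono : atTop.liminf (fun k => μs k (S ∩ projS1 d U ⁻¹' G)) ≤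
          atTop.liminf (fun k => μs k (projS1 d U ⁻¹' G)) :=
        liminf_le_liminf (Eventually.of_forall
          (fun k => measure_mono Set.inter_subset_right))
      rw [Measure.map_apply hgm hGm]
      simp only [Measure.map_apply hgm hGm]
      exact le_trans hμeq (le_trans hlim hmono)
    have hlimint : ∀ f : BoundedContinuousFunction (EuclideanSpace ℝ (Fin 2)) ℝ,
        Tendsto (fun k => ∫ z, f z ∂((μs k).map (projS1 d U))) atTop
          (nhds (∫ z, f z ∂(μ.map (projS1 d U)))) := by
      intro f
      exact BoundedContinuousFunction.tendsto_integral_of_forall_integral_le_liminf_integral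
        (fun g hg =>
          integral_le_liminf_integral_of_forall_isOpen_measure_le_liminf_measure hg h_opens) f
    exact hWweak _ _ hlimint
  -- Step 2: dominated convergence
  have hC0 : (0:ℝ) ≤ C := le_trans (hW0 0 0) (hWbd 0 0)
  have hint : Tendsto
      (fun k => ∫ U, (W ((μs k).map (projS1 d U)) (μ.map (projS1 d U))) ^ p ∂σ)
      atTop (nhds 0) := by
    have h0 : (0:ℝ) = ∫ (_ : Matrix (Fin d) (Fin 2) ℝ), (0:ℝ) ∂σ := by simp
    rw [h0]
    apply tendsto_integral_filter_of_dominated_convergence (fun _ => C ^ p)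
    · exact Eventually.of_forall (fun k => (hmeas k).aestronglyMeasurable)
    · refine Eventually.of_forall (fun k => Eventually.of_forall (fun U => ?_))
      rw [Real.norm_of_nonneg (Real.rpow_nonneg (hW0 _ _) p)]
      exact Real.rpow_le_rpow (hW0 _ _) (hWbd _ _) hp0.le
    · exact integrable_const _
    · have hae : ∀ᵐ U ∂σ, Uᵀ * U = 1 := by
        rw [ae_iff]
        exact hσ
      filter_upwards [hae] with U hU
      have := key U hU
      have hcont : ContinuousAt (fun x : ℝ => x ^ p) 0 :=
        Real.continuousAt_rpow_const 0 p (Or.inr hp0.le)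
      have := hcont.tendsto.comp this
      simpa [Function.comp_def, Real.zero_rpow (ne_of_gt hp0)] using this
  have hcont : ContinuousAt (fun x : ℝ => x ^ (1/p)) 0 :=
    Real.continuousAt_rpow_const 0 (1/p) (Or.inr (by positivity))
  have h2 := hcont.tendsto.comp hint
  rw [Real.zero_rpow (by positivity : (1:ℝ)/p ≠ 0)] at h2
  exact h2
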